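/- For all positive integers s and t, the dual graph Ĝ of an edge-colored graph G contains a rainbow copy of K_{s,t} (with one side inside V₁ and the other inside V₂) if and only if G contains a rainbow copy of K_{s,t}. -/

import Mathlib

/-- The bipartite dual graph `Ĝ` of a graph `G`. -/
def dualGraph {V : Type*} (G : SimpleGraph V) : SimpleGraph (V ⊕ V) where
  Adj a b := ∃ u w, G.Adj u w ∧
    ((a = Sum.inl u ∧ b = Sum.inr w) ∨ (a = Sum.inr w ∧ b = Sum.inl u))
  symm := by
    constructor
    rintro a b ⟨u, w, h, (⟨rfl, rfl⟩ | ⟨rfl, rfl⟩)⟩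
    · exact ⟨u, w, h, Or.inr ⟨rfl, rfl⟩⟩
    · exact ⟨u, w, h, Or.inl ⟨rfl, rfl⟩⟩
  loopless := by
    constructor
    rintro a ⟨u, w, h, (⟨rfl, h2⟩ | ⟨rfl, h2⟩)⟩ <;> simp at h2

/-- The dual graph `Ĝ` contains a rainbow `K_{s,t}` (one side inside `V₁`, the other
inside `V₂`) if and only if `G` contains a rainbow `K_{s,t}`. -/
theorem stmt_4 {V C : Type*} (s t : ℕ) (hs : 0 < s) (ht : 0 < t)
    (G : SimpleGraph V) (c : V → V → C) (hc : ∀ u v, c u v = c v u)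
    (chat : (V ⊕ V) → (V ⊕ V) → C)
    (hchat : ∀ u w, chat (Sum.inl u) (Sum.inr w) = c u w ∧
      chat (Sum.inr w) (Sum.inl u) = c u w) :
    (∃ (A B : Finset V), A.card = s ∧ B.card = t ∧
      (∀ a ∈ A, ∀ b ∈ B, (dualGraph G).Adj (Sum.inl a) (Sum.inr b)) ∧
      (∀ a ∈ A, ∀ b ∈ B, ∀ a' ∈ A, ∀ b' ∈ B, (a ≠ a' ∨ b ≠ b') →
        chat (Sum.inl a) (Sum.inr b) ≠ chat (Sum.inl a') (Sum.inr b'))) ↔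
    (∃ (A B : Finset V), Disjoint A B ∧ A.card = s ∧ B.card = t ∧
      (∀ a ∈ A, ∀ b ∈ B, G.Adj a b) ∧
      (∀ a ∈ A, ∀ b ∈ B, ∀ a' ∈ A, ∀ b' ∈ B, (a ≠ a' ∨ b ≠ b') →
        c a b ≠ c a' b')) := by
  have key : ∀ a b, (dualGraph G).Adj (Sum.inl a) (Sum.inr b) ↔ G.Adj a b := by
    intro a b
    constructor
    · rintro ⟨u, w, h, ⟨h1, h2⟩ | ⟨h1, h2⟩⟩
      · injection h1 with e1; injection h2 with e2; subst e1; subst e2; exact h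
      · simp at h1
    · intro h; exact ⟨a, b, h, Or.inl ⟨rfl, rfl⟩⟩
  constructor
  · rintro ⟨A, B, hA, hB, hadj, hrb⟩
    refine ⟨A, B, ?_, hA, hB,
      fun a ha b hb => (key a b).1 (hadj a ha b hb), ?_⟩
    · rw [Finset.disjoint_left]
      intro x hx hxB
      exact G.irrefl ((key x x).1 (hadj x hx x hxB))
    · intro a ha b hb a' ha' b' hb' hne
      have := hrb a ha b hb a' ha' b' hb' hne
      rwa [(hchat a b).1, (hchat a' b').1] at this
  · rintro ⟨A, B, hd, hA, hB, hadj, hrb⟩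
    refine ⟨A, B, hA, hB,
      fun a ha b hb => (key a b).2 (hadj a ha b hb), ?_⟩
    intro a ha b hb a' ha' b' hb' hne
    rw [(hchat a b).1, (hchat a' b').1]
    exact hrb a ha b hb a' ha' b' hb' hne
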